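/- For any nonnegative n×n matrix A with λ(A) > 0, the max-algebraic dimension of V*(A) (the cardinality of its unique scaled basis of max extremals) equals the linear-algebraic dimension of its linear hull L(C(A)) = {x ∈ ℝⁿ : a_ij x_j = λ(A) x_i for all critical edges (i,j)}; both equal n(C(A)) + |non-critical nodes|, where n(C(A)) is the number of strongly connected components of the critical digraph. -/

import Mathlib

open Finset

/-- Max-times matrix product: `(A ⊗ B) i j = max_k (A i k * B k j)`. -/
noncomputable def mProd {n : ℕ} (A B : Matrix (Fin n) (Fin n) NNReal) :
    Matrix (Fin n) (Fin n) NNReal :=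
  fun i j => univ.sup fun k => A i k * B k j

/-- Max-algebraic matrix powers, `mPow A 0 = I`. -/
noncomputable def mPow {n : ℕ} (A : Matrix (Fin n) (Fin n) NNReal) :
    ℕ → Matrix (Fin n) (Fin n) NNReal
  | 0 => fun i j => if i = j then 1 else 0
  | k + 1 => mProd (mPow A k) A

/-- Kleene star `A* = I ⊕ A ⊕ ... ⊕ A^{n-1}` in max algebra. -/
noncomputable def klStar {n : ℕ} (A : Matrix (Fin n) (Fin n) NNReal) :
    Matrix (Fin n) (Fin n) NNReal :=
  fun i j => (Finset.range n).sup fun k => mPow A k i j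

/-- Partial "sums" `I ⊕ A ⊕ ... ⊕ A^m` of the Kleene star series. -/
noncomputable def kPartial {n : ℕ} (A : Matrix (Fin n) (Fin n) NNReal) (m : ℕ) :
    Matrix (Fin n) (Fin n) NNReal :=
  fun i j => (Finset.range (m + 1)).sup fun k => mPow A k i j

/-- The weight of the cycle given by the list `l` (with wrap-around edge). -/
def cycleWeight {n : ℕ} (A : Matrix (Fin n) (Fin n) NNReal) (l : List (Fin n)) : NNReal :=
  ((l.zip (l.rotate 1)).map fun p => A p.1 p.2).prod

/-- The geometric mean of a cycle: `w(σ,A)^{1/k}`. -/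
noncomputable def cycleMean {n : ℕ} (A : Matrix (Fin n) (Fin n) NNReal) (l : List (Fin n)) :
    NNReal :=
  (cycleWeight A l) ^ ((l.length : ℝ)⁻¹)

/-- The maximum cycle geometric mean `λ(A)`. -/
noncomputable def maxCycleMean {n : ℕ} (A : Matrix (Fin n) (Fin n) NNReal) : NNReal :=
  sSup {x | ∃ l : List (Fin n), l ≠ [] ∧ x = cycleMean A l}

/-- `(i,j)` is a critical edge: it lies on a cycle attaining `λ(A)`. -/
def criticalEdge {n : ℕ} (A : Matrix (Fin n) (Fin n) NNReal) (i j : Fin n) : Prop :=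
  ∃ l : List (Fin n), l ≠ [] ∧ cycleMean A l = maxCycleMean A ∧ (i, j) ∈ l.zip (l.rotate 1)

/-- Max-algebraic matrix-vector product. -/
noncomputable def mVec {n : ℕ} (A : Matrix (Fin n) (Fin n) NNReal) (x : Fin n → NNReal) :
    Fin n → NNReal :=
  fun i => univ.sup fun j => A i j * x j

/-- The subeigencone `V*(A) = {y : A ⊗ y ≤ λ(A) y}`. -/
def Vstar {n : ℕ} (A : Matrix (Fin n) (Fin n) NNReal) : Set (Fin n → NNReal) :=
  {y | ∀ i, mVec A y i ≤ maxCycleMean A * y i}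

/-- `i` is a critical node: it lies on a critical cycle. -/
def criticalNode {n : ℕ} (A : Matrix (Fin n) (Fin n) NNReal) (i : Fin n) : Prop :=
  ∃ j, criticalEdge A i j

/-- The linear hull `L(C(A)) = {x ∈ ℝⁿ : a_ij x_j = λ(A) x_i for critical (i,j)}`. -/
noncomputable def LC {n : ℕ} (A : Matrix (Fin n) (Fin n) NNReal) :
    Submodule ℝ (Fin n → ℝ) where
  carrier := {x | ∀ i j, criticalEdge A i j →
    (A i j : ℝ) * x j = (maxCycleMean A : ℝ) * x i}
  add_mem' := by
    intro a b ha hb i j h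
    simp only [Pi.add_apply, mul_add, ha i j h, hb i j h]
  zero_mem' := by intro i j h; simp
  smul_mem' := by
    intro c xv hxv i j h
    simp only [Pi.smul_apply, smul_eq_mul]
    rw [mul_left_comm, hxv i j h]; ring

/-- Scaled max extremals of `V*(A)`: the unique scaled basis. -/
def scaledMaxExtremals {n : ℕ} (A : Matrix (Fin n) (Fin n) NNReal) :
    Set (Fin n → NNReal) :=
  {y | y ∈ Vstar A ∧ univ.sup y = 1 ∧
    ∀ u w, u ∈ Vstar A → w ∈ Vstar A →
      y = (fun i => max (u i) (w i)) → y = u ∨ y = w}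

/-- Mutual reachability in the critical digraph, on critical nodes:
its classes are the strongly connected components of `C(A)`. -/
def critSetoid {n : ℕ} (A : Matrix (Fin n) (Fin n) NNReal) :
    Setoid {i : Fin n // criticalNode A i} :=
  ⟨fun a b => Relation.ReflTransGen (criticalEdge A) a.1 b.1 ∧
      Relation.ReflTransGen (criticalEdge A) b.1 a.1,
    ⟨fun _ => ⟨.refl, .refl⟩, fun h => ⟨h.2, h.1⟩,
      fun h1 h2 => ⟨h1.1.trans h2.1, h2.2.trans h1.2⟩⟩⟩



section Walks
variable {n : ℕ} (A : Matrix (Fin n) (Fin n) NNReal)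

/-- Weight of the walk starting at `i` with successive vertices `l`. -/
def wW : Fin n → List (Fin n) → NNReal
  | _, [] => 1
  | i, j :: t => A i j * wW j t

/-- End vertex of the walk starting at `i` with successive vertices `l`. -/
def wEnd (i : Fin n) (l : List (Fin n)) : Fin n := l.getLastD i

@[simp] lemma wEnd_nil (i : Fin n) : wEnd i ([] : List (Fin n)) = i := rfl

lemma wEnd_cons (i j : Fin n) (t : List (Fin n)) : wEnd i (j :: t) = wEnd j t :=
  List.getLastD_cons

@[simp] lemma wW_nil (i : Fin n) : wW A i [] = 1 := rfl

lemma wW_cons (i j : Fin n) (t : List (Fin n)) : wW A i (j :: t) = A i j * wW A j t := rfl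

lemma wEnd_append (i : Fin n) (l₁ l₂ : List (Fin n)) :
    wEnd i (l₁ ++ l₂) = wEnd (wEnd i l₁) l₂ := by
  induction l₁ generalizing i with
  | nil => simp
  | cons j t ih => simp [wEnd_cons, List.cons_append, ih]

lemma wW_append (i : Fin n) (l₁ l₂ : List (Fin n)) :
    wW A i (l₁ ++ l₂) = wW A i l₁ * wW A (wEnd i l₁) l₂ := by
  induction l₁ generalizing i with
  | nil => simp
  | cons j t ih => simp [wW_cons, wEnd_cons, List.cons_append, ih, mul_assoc]

lemma wW_singleton (i j : Fin n) : wW A i [j] = A i j := by simp [wW_cons]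

@[simp] lemma wEnd_singleton (i j : Fin n) : wEnd i [j] = j := rfl

end Walks

section MPow
variable {n : ℕ} (A : Matrix (Fin n) (Fin n) NNReal)

-- copy of defs needed (will be replaced by originals in final file)
noncomputable def mProd' (A B : Matrix (Fin n) (Fin n) NNReal) :
    Matrix (Fin n) (Fin n) NNReal :=
  fun i j => univ.sup fun k => A i k * B k j

noncomputable def mPow' (A : Matrix (Fin n) (Fin n) NNReal) :
    ℕ → Matrix (Fin n) (Fin n) NNReal
  | 0 => fun i j => if i = j then 1 else 0
  | k + 1 => mProd' (mPow' A k) A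

noncomputable def klStar' (A : Matrix (Fin n) (Fin n) NNReal) :
    Matrix (Fin n) (Fin n) NNReal :=
  fun i j => (Finset.range n).sup fun k => mPow' A k i j

lemma klStar_apply (i j : Fin n) :
    klStar' A i j = (Finset.range n).sup fun k => mPow' A k i j := rfl

lemma mPow_zero_apply (i j : Fin n) : mPow' A 0 i j = if i = j then 1 else 0 := rfl

lemma mPow_succ_apply (k : ℕ) (i j : Fin n) :
    mPow' A (k+1) i j = univ.sup fun m => mPow' A k i m * A m j := rfl

/-- Every walk weight is at most the corresponding `mPow` entry. -/
lemma wW_le_mPow (i : Fin n) (l : List (Fin n)) :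
    wW A i l ≤ mPow' A l.length i (wEnd i l) := by
  induction l using List.reverseRecOn generalizing i with
  | nil => simp [mPow_zero_apply]
  | append_singleton t j ih =>
      rw [wW_append, wEnd_append]
      simp only [wW_singleton, List.length_append, List.length_singleton]
      calc wW A i t * A (wEnd i t) j
          ≤ mPow' A t.length i (wEnd i t) * A (wEnd i t) j := by
            exact mul_le_mul_left (ih i) _
        _ ≤ mPow' A (t.length + 1) i (wEnd (wEnd i t) [j]) := by
            rw [mPow_succ_apply, wEnd_singleton]
            exact Finset.le_sup (f := fun m => mPow' A t.length i m * A m j)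
              (Finset.mem_univ (wEnd i t))

/-- `mPow` entries are attained by walks (when they can be nonzero). -/
lemma exists_walk_mPow (k : ℕ) (i j : Fin n) (h : i = j ∨ k ≠ 0) :
    ∃ l : List (Fin n), l.length = k ∧ wEnd i l = j ∧ wW A i l = mPow' A k i j := by
  induction k generalizing j with
  | zero =>
      rcases h with h | h
      · subst h; exact ⟨[], rfl, rfl, by simp [mPow_zero_apply]⟩
      · exact absurd rfl h
  | succ k ih =>
      by_cases hz : mPow' A (k+1) i j = 0
      · refine ⟨List.replicate k i ++ [j], by simp, by simp [wEnd_append], ?_⟩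
        have h1 := wW_le_mPow A i (List.replicate k i ++ [j])
        rw [wEnd_append, wEnd_singleton] at h1
        simp only [List.length_append, List.length_replicate, List.length_singleton] at h1
        rw [hz] at h1
        rw [hz]
        exact le_antisymm h1 (zero_le)
      · rw [mPow_succ_apply] at hz ⊢
        obtain ⟨m, -, hm⟩ := Finset.exists_mem_eq_sup Finset.univ
          ⟨i, Finset.mem_univ i⟩ (fun m => mPow' A k i m * A m j)
        have hmne : mPow' A k i m ≠ 0 := by
          intro h0; rw [hm, h0, zero_mul] at hz; exact hz rfl
        have him : i = m ∨ k ≠ 0 := by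
          rcases Nat.eq_zero_or_pos k with hk | hk
          · subst hk; left
            by_contra hne
            exact hmne (by simp [mPow_zero_apply, hne])
          · right; omega
        obtain ⟨l, hlen, hend, hw⟩ := ih m him
        refine ⟨l ++ [j], by simp [hlen], by simp [wEnd_append, hend], ?_⟩
        rw [wW_append, wW_singleton, hend, hw, hm]

end MPow

section Cycles
variable {n : ℕ} (A : Matrix (Fin n) (Fin n) NNReal)

def cycleWeight' (l : List (Fin n)) : NNReal :=
  ((l.zip (l.rotate 1)).map fun p => A p.1 p.2).prod

noncomputable def cycleMean' (l : List (Fin n)) : NNReal :=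
  (cycleWeight' A l) ^ ((l.length : ℝ)⁻¹)

lemma rotate_one_cons (i : Fin n) (t : List (Fin n)) : (i :: t).rotate 1 = t ++ [i] := by
  rw [List.rotate_cons_succ, List.rotate_zero]

lemma zip_wrap_prod (t : List (Fin n)) (i x : Fin n) :
    (((i :: t).zip (t ++ [x])).map fun p => A p.1 p.2).prod = wW A i (t ++ [x]) := by
  induction t generalizing i with
  | nil => simp [wW_cons]
  | cons j t' ih =>
      rw [List.cons_append, List.zip_cons_cons, List.map_cons, List.prod_cons, ih, wW_cons]

lemma cycleWeight_eq_wW (i : Fin n) (t : List (Fin n)) :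
    cycleWeight' A (i :: t) = wW A i (t ++ [i]) := by
  rw [cycleWeight', rotate_one_cons, zip_wrap_prod]

/-- A closed walk gives a cycle list: `wW` of a closed walk is a `cycleWeight'`. -/
lemma closed_walk_eq_cycleWeight (i : Fin n) (l : List (Fin n)) (hl : l ≠ [])
    (hend : wEnd i l = i) :
    wW A i l = cycleWeight' A (i :: l.dropLast) ∧ (i :: l.dropLast).length = l.length := by
  have hsplit : l = l.dropLast ++ [i] := by
    conv_lhs => rw [← List.dropLast_append_getLast hl]
    rw [wEnd, List.getLastD_eq_getLast?, List.getLast?_eq_some_getLast hl] at hend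
    simp only [Option.getD_some] at hend
    rw [hend]
  constructor
  · rw [cycleWeight_eq_wW]; conv_lhs => rw [hsplit]
  · simp only [List.length_cons]
    conv_rhs => rw [hsplit]
    simp

end Cycles

section Mean
variable {n : ℕ} (A : Matrix (Fin n) (Fin n) NNReal)

noncomputable def lam' : NNReal :=
  sSup {x | ∃ l : List (Fin n), l ≠ [] ∧ x = cycleMean' A l}

lemma wW_le_pow (E : NNReal) (hE : ∀ i j, A i j ≤ E) (i : Fin n) (l : List (Fin n)) :
    wW A i l ≤ E ^ l.length := by
  induction l generalizing i with
  | nil => simp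
  | cons j t ih =>
      rw [wW_cons, List.length_cons, pow_succ, mul_comm (E ^ t.length) E]
      exact mul_le_mul' (hE i j) (ih j)

lemma pow_rpow_inv_natCast (x : NNReal) {k : ℕ} (hk : k ≠ 0) :
    (x ^ k) ^ ((k : ℝ)⁻¹) = x := by
  rw [← NNReal.rpow_natCast x k, ← NNReal.rpow_mul,
    mul_inv_cancel₀ (by exact_mod_cast hk), NNReal.rpow_one]

lemma rpow_inv_natCast_pow (x : NNReal) {k : ℕ} (hk : k ≠ 0) :
    (x ^ ((k : ℝ)⁻¹)) ^ k = x := by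
  rw [← NNReal.rpow_natCast (x ^ _) k, ← NNReal.rpow_mul,
    inv_mul_cancel₀ (by exact_mod_cast hk), NNReal.rpow_one]

lemma bddAbove_means :
    BddAbove {x | ∃ l : List (Fin n), l ≠ [] ∧ x = cycleMean' A l} := by
  classical
  set E : NNReal := univ.sup fun i => univ.sup fun j => A i j with hE
  refine ⟨E, fun x hx => ?_⟩
  obtain ⟨l, hl, rfl⟩ := hx
  obtain ⟨i, t, rfl⟩ : ∃ i t, l = i :: t := by
    cases l with
    | nil => exact absurd rfl hl
    | cons i t => exact ⟨i, t, rfl⟩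
  have hEb : ∀ a b : Fin n, A a b ≤ E := fun a b =>
    le_trans (Finset.le_sup (mem_univ b)) (Finset.le_sup (f := fun i => univ.sup fun j => A i j) (mem_univ a))
  have hw : cycleWeight' A (i :: t) ≤ E ^ (i :: t).length := by
    rw [cycleWeight_eq_wW]
    have := wW_le_pow A E hEb i (t ++ [i])
    simpa using this
  have : cycleMean' A (i :: t) ≤ (E ^ (i :: t).length) ^ (((i :: t).length : ℝ)⁻¹) :=
    NNReal.rpow_le_rpow hw (by positivity)
  rwa [pow_rpow_inv_natCast E (by simp)] at this

lemma cycleMean_le_lam (l : List (Fin n)) (hl : l ≠ []) : cycleMean' A l ≤ lam' A :=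
  le_csSup (bddAbove_means A) ⟨l, hl, rfl⟩

lemma cycleWeight_le_lam_pow (l : List (Fin n)) (hl : l ≠ []) :
    cycleWeight' A l ≤ lam' A ^ l.length := by
  have h := cycleMean_le_lam A l hl
  have hk : l.length ≠ 0 := by simpa using hl
  have := pow_le_pow_left' h l.length
  rwa [cycleMean', rpow_inv_natCast_pow _ hk] at this

lemma cycleMean_eq_iff (l : List (Fin n)) (hl : l ≠ []) :
    cycleMean' A l = lam' A ↔ cycleWeight' A l = lam' A ^ l.length := by
  have hk : l.length ≠ 0 := by simpa using hl
  constructor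
  · intro h
    have := congrArg (fun x : NNReal => x ^ l.length) h
    simpa [cycleMean', rpow_inv_natCast_pow _ hk] using this
  · intro h
    rw [cycleMean', h, pow_rpow_inv_natCast _ hk]

/-- Closed walks have weight at most `λ^length`. -/
lemma closed_wW_le (i : Fin n) (l : List (Fin n)) (hend : wEnd i l = i) :
    wW A i l ≤ lam' A ^ l.length := by
  rcases eq_or_ne l [] with rfl | hl
  · simp
  · obtain ⟨hw, hlen⟩ := closed_walk_eq_cycleWeight A i l hl hend
    rw [hw, ← hlen]
    exact cycleWeight_le_lam_pow A _ (by simp)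

end Mean

section Crit
variable {n : ℕ} (A : Matrix (Fin n) (Fin n) NNReal)

def criticalEdge' (i j : Fin n) : Prop :=
  ∃ l : List (Fin n), l ≠ [] ∧ cycleMean' A l = lam' A ∧ (i, j) ∈ l.zip (l.rotate 1)

lemma zip_trunc {α : Type*} : ∀ (z x : List α) (y : List α), z.length ≤ x.length →
    (x ++ y).zip z = x.zip z
  | [], x, y, _ => by simp
  | c :: z', [], y, h => by simp at h
  | c :: z', a :: x', y, h => by
      simp only [List.cons_append, List.zip_cons_cons]
      rw [zip_trunc z' x' y (by simpa using h)]

lemma zip_tail_mem_split {α : Type*} (u v : α) :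
    ∀ (L : List α), (u, v) ∈ L.zip L.tail → ∃ s t, L = s ++ u :: v :: t := by
  intro L
  induction L with
  | nil => simp
  | cons a L' ih =>
      cases L' with
      | nil => simp
      | cons b L'' =>
          intro h
          rw [List.tail_cons, List.zip_cons_cons, List.mem_cons] at h
          rcases h with h | h
          · obtain ⟨rfl, rfl⟩ := Prod.mk.injEq .. ▸ (Prod.ext_iff.mp h)
            exact ⟨[], L'', rfl⟩
          · obtain ⟨s, t, hst⟩ := ih (by
              have : (u, v) ∈ (b :: L'').zip L'' := h
              simpa using this)
            exact ⟨a :: s, t, by rw [List.cons_append, hst]⟩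

/-- membership in `zip c (c.rotate 1)` means being consecutive in the closed chain. -/
lemma mem_cycle_zip_iff (h : Fin n) (t : List (Fin n)) (u v : Fin n) :
    (u, v) ∈ (h :: t).zip ((h :: t).rotate 1) ↔
      (u, v) ∈ (h :: (t ++ [h])).zip (t ++ [h]) := by
  rw [rotate_one_cons]
  constructor
  · intro hm
    have : (h :: t) ++ [h] = h :: (t ++ [h]) := rfl
    rw [← this, show ((h :: t) ++ [h]).zip (t ++ [h]) = (h :: t).zip (t ++ [h]) from
      zip_trunc _ _ _ (by simp)]
    exact hm
  · intro hm
    have : (h :: (t ++ [h])).zip (t ++ [h]) = ((h :: t) ++ [h]).zip (t ++ [h]) := rfl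
    rw [this, zip_trunc _ _ _ (by simp)] at hm
    exact hm

/-- Rotation: from a closed walk whose chain contains consecutive `u, v`, extract the
complementary path from `v` back to `u`. -/
lemma rot_closed_walk (h u v : Fin n) (w s t : List (Fin n)) (hw : wEnd h w = h)
    (hchain : h :: w = s ++ u :: v :: t) :
    ∃ p, wEnd v p = u ∧ A u v * wW A v p = wW A h w ∧ p.length + 1 = w.length := by
  cases s with
  | nil =>
      simp only [List.nil_append, List.cons.injEq] at hchain
      obtain ⟨rfl, rfl⟩ := hchain
      refine ⟨t, ?_, by rw [wW_cons], by simp⟩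
      have := hw
      rwa [wEnd_cons] at this
  | cons h₀ s' =>
      simp only [List.cons_append, List.cons.injEq] at hchain
      obtain ⟨rfl, rfl⟩ := hchain
      refine ⟨t ++ (s' ++ [u]), ?_, ?_, ?_⟩
      · rw [wEnd_append]
        have hvt : wEnd v t = h := by
          have : wEnd h (s' ++ u :: v :: t) = h := hw
          rw [show s' ++ u :: v :: t = (s' ++ [u]) ++ (v :: t) by simp,
            wEnd_append, wEnd_cons] at this
          exact this
        rw [hvt, wEnd_append, wEnd_singleton]
      · have hsplit : s' ++ u :: v :: t = (s' ++ [u]) ++ (v :: t) := by simp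
        have hvt : wEnd v t = h := by
          have h1 : wEnd h ((s' ++ [u]) ++ (v :: t)) = h := by rw [← hsplit]; exact hw
          rwa [wEnd_append, wEnd_append, wEnd_singleton, wEnd_cons] at h1
        rw [wW_append A v t, hvt, hsplit, wW_append A h (s' ++ [u]) (v :: t), wEnd_append,
          wEnd_singleton, wW_cons]
        ring
      · simp only [List.length_append, List.length_cons, List.length_singleton,
          List.length_nil]
        omega

/-- From a critical edge, extract the complementary critical path `v → u`. -/
lemma criticalEdge_path (u v : Fin n) (hc : criticalEdge' A u v) :
    ∃ p, wEnd v p = u ∧ A u v * wW A v p = lam' A ^ (p.length + 1) := by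
  obtain ⟨c, hne, hmean, hmem⟩ := hc
  obtain ⟨h, t, rfl⟩ : ∃ h t, c = h :: t := by
    cases c with
    | nil => exact absurd rfl hne
    | cons h t => exact ⟨h, t, rfl⟩
  rw [mem_cycle_zip_iff] at hmem
  have hchain : (u, v) ∈ (h :: (t ++ [h])).zip (h :: (t ++ [h])).tail := hmem
  obtain ⟨s, t₂, hsplit⟩ := zip_tail_mem_split u v _ hchain
  have hclosed : wEnd h (t ++ [h]) = h := by rw [wEnd_append, wEnd_singleton]
  obtain ⟨p, hp1, hp2, hp3⟩ := rot_closed_walk A h u v (t ++ [h]) s t₂ hclosed hsplit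
  refine ⟨p, hp1, ?_⟩
  rw [hp2, ← cycleWeight_eq_wW]
  have hwe := (cycleMean_eq_iff A (h :: t) hne).mp hmean
  rw [hwe]
  congr 1
  simp only [List.length_cons]
  have : p.length + 1 = (t ++ [h]).length := hp3
  simpa using this.symm

end Crit

section Edges
variable {n : ℕ} (A : Matrix (Fin n) (Fin n) NNReal)

/-- The edges of the walk starting at `i` with successive vertices `l`. -/
def wEdges (i : Fin n) (l : List (Fin n)) : List (Fin n × Fin n) := (i :: l).zip l

@[simp] lemma wEdges_nil (i : Fin n) : wEdges i [] = [] := rfl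

lemma wEdges_cons (i j : Fin n) (t : List (Fin n)) :
    wEdges i (j :: t) = (i, j) :: wEdges j t := rfl

lemma wEdges_append (i : Fin n) (l₁ l₂ : List (Fin n)) :
    wEdges i (l₁ ++ l₂) = wEdges i l₁ ++ wEdges (wEnd i l₁) l₂ := by
  induction l₁ generalizing i with
  | nil => simp
  | cons j t ih => rw [List.cons_append, wEdges_cons, wEnd_cons, ih, wEdges_cons,
      List.cons_append]

lemma closed_split (i : Fin n) (l : List (Fin n)) (hl : l ≠ []) (hend : wEnd i l = i) :
    l = l.dropLast ++ [i] := by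
  conv_lhs => rw [← List.dropLast_append_getLast hl]
  rw [wEnd, List.getLastD_eq_getLast?, List.getLast?_eq_some_getLast hl] at hend
  simp only [Option.getD_some] at hend
  rw [hend]

/-- Extend a walk of critical edges to a critical closed walk. -/
lemma crit_walk_extend (l : List (Fin n)) : ∀ (i j : Fin n), wEnd i l = j →
    (∀ e ∈ wEdges i l, criticalEdge' A e.1 e.2) →
    ∃ p, wEnd j p = i ∧ wW A i l * wW A j p = lam' A ^ (l.length + p.length) := by
  induction l with
  | nil =>
      intro i j hend _
      rw [wEnd_nil] at hend; subst hend
      exact ⟨[], rfl, by simp⟩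
  | cons v t ih =>
      intro i j hend hcrit
      rw [wEnd_cons] at hend
      have hedge : criticalEdge' A i v := hcrit (i, v) (by rw [wEdges_cons]; simp)
      obtain ⟨p, hp1, hp2⟩ := ih v j hend (fun e he => hcrit e (by rw [wEdges_cons]; simp [he]))
      obtain ⟨q, hq1, hq2⟩ := criticalEdge_path A i v hedge
      refine ⟨p ++ q, by rw [wEnd_append, hp1, hq1], ?_⟩
      rw [wW_append, hp1, wW_cons]
      calc A i v * wW A v t * (wW A j p * wW A v q)
          = (A i v * wW A v q) * (wW A v t * wW A j p) := by ring
        _ = lam' A ^ (q.length + 1) * lam' A ^ (t.length + p.length) := by rw [hq2, hp2]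
        _ = lam' A ^ ((v :: t).length + (p ++ q).length) := by
            rw [← pow_add]; congr 1; simp; omega

/-- KEY: a closed walk all of whose edges are critical has weight `λ^length`. -/
lemma crit_closed_wW (i : Fin n) (l : List (Fin n)) (hlam : lam' A ≠ 0)
    (hend : wEnd i l = i) (hcrit : ∀ e ∈ wEdges i l, criticalEdge' A e.1 e.2) :
    wW A i l = lam' A ^ l.length := by
  obtain ⟨p, hp1, hp2⟩ := crit_walk_extend A l i i hend hcrit
  have h1 : wW A i l ≤ lam' A ^ l.length := closed_wW_le A i l hend
  have h2 : wW A i p ≤ lam' A ^ p.length := closed_wW_le A i p hp1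
  have hb : (lam' A ^ p.length : NNReal) ≠ 0 := pow_ne_zero _ hlam
  refine le_antisymm h1 ?_
  have hle : lam' A ^ l.length * lam' A ^ p.length ≤ wW A i l * lam' A ^ p.length := by
    rw [← pow_add, ← hp2]
    exact mul_le_mul_right h2 _
  exact le_of_mul_le_mul_right hle (pos_iff_ne_zero.mpr hb)

/-- Conversely, all edges of a closed walk of weight `λ^length` are critical. -/
lemma closed_wW_crit (i : Fin n) (l : List (Fin n)) (hl : l ≠ []) (hend : wEnd i l = i)
    (hw : wW A i l = lam' A ^ l.length) :
    ∀ e ∈ wEdges i l, criticalEdge' A e.1 e.2 := by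
  intro e he
  obtain ⟨hweq, hlen⟩ := closed_walk_eq_cycleWeight A i l hl hend
  refine ⟨i :: l.dropLast, by simp, ?_, ?_⟩
  · rw [cycleMean_eq_iff A _ (by simp), ← hweq, hlen, hw]
  · have hrot : (i :: l.dropLast).rotate 1 = l := by
      rw [rotate_one_cons, ← closed_split i l hl hend]
    rw [hrot]
    have htr : ((i :: l.dropLast) ++ [i]).zip l = (i :: l.dropLast).zip l :=
      zip_trunc l (i :: l.dropLast) [i] (by
        simp only [List.length_cons, List.length_dropLast]
        have := List.length_pos_iff.mpr hl
        omega)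
    rw [← htr, List.cons_append, ← closed_split i l hl hend]
    exact he

lemma walk_to_reflTransGen {R : Fin n → Fin n → Prop} (l : List (Fin n)) :
    ∀ i, (∀ e ∈ wEdges i l, R e.1 e.2) → Relation.ReflTransGen R i (wEnd i l) := by
  induction l with
  | nil => intro i _; rw [wEnd_nil]
  | cons j t ih =>
      intro i h
      rw [wEnd_cons]
      exact Relation.ReflTransGen.head (h (i, j) (by rw [wEdges_cons]; simp))
        (ih j fun e he => h e (by rw [wEdges_cons]; simp [he]))

lemma reflTransGen_to_walk {a b : Fin n}
    (h : Relation.ReflTransGen (criticalEdge' A) a b) :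
    ∃ l, wEnd a l = b ∧ ∀ e ∈ wEdges a l, criticalEdge' A e.1 e.2 := by
  induction h with
  | refl => exact ⟨[], rfl, by simp⟩
  | tail _ hbc ih =>
      obtain ⟨l, hend, hcrit⟩ := ih
      rename_i b' c _
      refine ⟨l ++ [c], by rw [wEnd_append, hend, wEnd_singleton], ?_⟩
      intro e he
      rw [wEdges_append, hend] at he
      rcases List.mem_append.mp he with h1 | h1
      · exact hcrit e h1
      · have he2 : e = (b', c) := by
          have hsing : wEdges b' [c] = [(b', c)] := rfl
          rw [hsing] at h1; simpa using h1
        subst he2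
        exact hbc

/-- A critical edge yields mutual reachability and critical nodes. -/
lemma criticalEdge_symm_reach (i j : Fin n) (hc : criticalEdge' A i j) :
    Relation.ReflTransGen (criticalEdge' A) j i ∧ (∃ k, criticalEdge' A j k) := by
  obtain ⟨q, hq1, hq2⟩ := criticalEdge_path A i j hc
  have hclosed : wEnd i (j :: q) = i := by rw [wEnd_cons, hq1]
  have hw : wW A i (j :: q) = lam' A ^ (j :: q).length := by
    rw [wW_cons, hq2]; simp
  have hcrit := closed_wW_crit A i (j :: q) (by simp) hclosed hw
  have hqcrit : ∀ e ∈ wEdges j q, criticalEdge' A e.1 e.2 := fun e he =>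
    hcrit e (by rw [wEdges_cons]; simp [he])
  constructor
  · have := walk_to_reflTransGen (R := criticalEdge' A) q j hqcrit
    rwa [hq1] at this
  · cases q with
    | nil =>
        rw [wEnd_nil] at hq1; subst hq1
        exact ⟨j, hc⟩
    | cons x q' => exact ⟨x, hqcrit (j, x) (by rw [wEdges_cons]; simp)⟩

end Edges

section Kleene
variable {n : ℕ} (A : Matrix (Fin n) (Fin n) NNReal)

noncomputable def Bm : Matrix (Fin n) (Fin n) NNReal := fun i j => (lam' A)⁻¹ * A i j

lemma wW_Bm (i : Fin n) (l : List (Fin n)) :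
    wW (Bm A) i l = (lam' A)⁻¹ ^ l.length * wW A i l := by
  induction l generalizing i with
  | nil => simp
  | cons j t ih =>
      rw [wW_cons, wW_cons, ih, List.length_cons, pow_succ]
      show (lam' A)⁻¹ * A i j * ((lam' A)⁻¹ ^ t.length * wW A j t) = _
      ring

lemma closed_wW_Bm_le_one (hlam : lam' A ≠ 0) (i : Fin n) (l : List (Fin n))
    (hend : wEnd i l = i) : wW (Bm A) i l ≤ 1 := by
  rw [wW_Bm]
  calc (lam' A)⁻¹ ^ l.length * wW A i l
      ≤ (lam' A)⁻¹ ^ l.length * lam' A ^ l.length :=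
        mul_le_mul_right (closed_wW_le A i l hend) _
    _ = 1 := by rw [← mul_pow, inv_mul_cancel₀ hlam, one_pow]

lemma not_nodup_split {α : Type*} : ∀ (L : List α), ¬L.Nodup →
    ∃ (s : List α) (v : α) (t : List α), L = s ++ v :: t ∧ v ∈ t := by
  intro L
  induction L with
  | nil => intro h; exact absurd List.nodup_nil h
  | cons a L' ih =>
      intro h
      by_cases ha : a ∈ L'
      · exact ⟨[], a, L', rfl, ha⟩
      · have : ¬L'.Nodup := fun hn => h (List.nodup_cons.mpr ⟨ha, hn⟩)
        obtain ⟨s, v, t, rfl, hv⟩ := ih this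
        exact ⟨a :: s, v, t, rfl, hv⟩

lemma shorten_walk (hlam : lam' A ≠ 0) (l : List (Fin n)) (i : Fin n)
    (hlen : n ≤ l.length) :
    ∃ l', l'.length < l.length ∧ wEnd i l' = wEnd i l ∧
      wW (Bm A) i l ≤ wW (Bm A) i l' := by
  have hnodup : ¬(i :: l).Nodup := by
    intro hn
    have := List.Nodup.length_le_card hn
    simp only [List.length_cons, Fintype.card_fin] at this
    omega
  obtain ⟨s, v, t, hsplit, hv⟩ := not_nodup_split _ hnodup
  obtain ⟨t₁, t₂, rfl⟩ := List.append_of_mem hv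
  cases s with
  | nil =>
      simp only [List.nil_append, List.cons.injEq] at hsplit
      obtain ⟨rfl, rfl⟩ := hsplit
      refine ⟨t₂, by simp; omega, ?_, ?_⟩
      · rw [show t₁ ++ i :: t₂ = (t₁ ++ [i]) ++ t₂ by simp, wEnd_append, wEnd_append,
          wEnd_singleton]
      · rw [show t₁ ++ i :: t₂ = (t₁ ++ [i]) ++ t₂ by simp, wW_append, wEnd_append,
          wEnd_singleton]
        have hc : wW (Bm A) i (t₁ ++ [i]) ≤ 1 :=
          closed_wW_Bm_le_one A hlam i _ (by rw [wEnd_append, wEnd_singleton])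
        calc wW (Bm A) i (t₁ ++ [i]) * wW (Bm A) i t₂ ≤ 1 * wW (Bm A) i t₂ :=
              mul_le_mul_left hc _
          _ = wW (Bm A) i t₂ := one_mul _
  | cons a s' =>
      simp only [List.cons_append, List.cons.injEq] at hsplit
      obtain ⟨rfl, rfl⟩ := hsplit
      refine ⟨s' ++ v :: t₂, by simp <;> omega, ?_, ?_⟩
      · rw [show s' ++ v :: (t₁ ++ v :: t₂) = (s' ++ [v]) ++ ((t₁ ++ [v]) ++ t₂) by simp,
          show s' ++ v :: t₂ = (s' ++ [v]) ++ t₂ by simp,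
          wEnd_append i (s' ++ [v]) ((t₁ ++ [v]) ++ t₂), wEnd_append i (s' ++ [v]) t₂,
          wEnd_append (wEnd i (s' ++ [v])) (t₁ ++ [v]) t₂]
        congr 1
        simp [wEnd_append]
      · rw [show s' ++ v :: (t₁ ++ v :: t₂) = (s' ++ [v]) ++ ((t₁ ++ [v]) ++ t₂) by simp,
          show s' ++ v :: t₂ = (s' ++ [v]) ++ t₂ by simp]
        rw [wW_append (Bm A) i (s' ++ [v]) ((t₁ ++ [v]) ++ t₂),
          wW_append (Bm A) (wEnd i (s' ++ [v])) (t₁ ++ [v]) t₂,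
          wW_append (Bm A) i (s' ++ [v]) t₂,
          show wEnd i (s' ++ [v]) = v by simp [wEnd_append],
          show wEnd v (t₁ ++ [v]) = v by simp [wEnd_append]]
        have hc : wW (Bm A) v (t₁ ++ [v]) ≤ 1 :=
          closed_wW_Bm_le_one A hlam v _ (by rw [wEnd_append, wEnd_singleton])
        calc wW (Bm A) i (s' ++ [v]) * (wW (Bm A) v (t₁ ++ [v]) * wW (Bm A) v t₂)
            ≤ wW (Bm A) i (s' ++ [v]) * (1 * wW (Bm A) v t₂) := by
              exact mul_le_mul_right (mul_le_mul_left hc _) _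
          _ = wW (Bm A) i (s' ++ [v]) * wW (Bm A) v t₂ := by rw [one_mul]

lemma walk_le_klStar_aux (hlam : lam' A ≠ 0) :
    ∀ (m : ℕ) (l : List (Fin n)) (i j : Fin n), l.length ≤ m → wEnd i l = j →
      wW (Bm A) i l ≤ klStar' (Bm A) i j := by
  intro m
  induction m with
  | zero =>
      intro l i j hlen hend
      have : l = [] := List.length_eq_zero_iff.mp (by omega)
      subst this
      rw [wEnd_nil] at hend; subst hend
      have h1 := wW_le_mPow (Bm A) i ([] : List (Fin n))
      rw [klStar_apply]
      refine le_trans h1 (Finset.le_sup (f := fun k => mPow' (Bm A) k i i) ?_)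
      simp only [List.length_nil, Finset.mem_range]
      exact i.pos
  | succ m ih =>
      intro l i j hlen hend
      by_cases hn : l.length < n
      · have h1 := wW_le_mPow (Bm A) i l
        rw [hend] at h1
        rw [klStar_apply]
        exact le_trans h1 (Finset.le_sup (f := fun k => mPow' (Bm A) k i j)
          (Finset.mem_range.mpr hn))
      · obtain ⟨l', hl1, hl2, hl3⟩ := shorten_walk A hlam l i (by omega)
        exact le_trans hl3 (ih l' i j (by omega) (by rw [hl2, hend]))

lemma walk_le_klStar (hlam : lam' A ≠ 0) (l : List (Fin n)) (i j : Fin n)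
    (hend : wEnd i l = j) : wW (Bm A) i l ≤ klStar' (Bm A) i j :=
  walk_le_klStar_aux A hlam l.length l i j le_rfl hend

lemma klStar_diag (hlam : lam' A ≠ 0) (i : Fin n) : klStar' (Bm A) i i = 1 := by
  rw [klStar_apply]
  refine le_antisymm ?_ ?_
  · refine Finset.sup_le fun k hk => ?_
    obtain ⟨l, hlen, hend, hw⟩ := exists_walk_mPow (Bm A) k i i (Or.inl rfl)
    rw [← hw]
    exact closed_wW_Bm_le_one A hlam i l hend
  · have := Finset.le_sup (f := fun k => mPow' (Bm A) k i i) (Finset.mem_range.mpr i.pos)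
    simpa [mPow_zero_apply] using this

/-- Extract an attaining walk from a Kleene star entry. -/
lemma klStar_attained (i j : Fin n) :
    klStar' (Bm A) i j = 0 ∨
      ∃ l, wEnd i l = j ∧ wW (Bm A) i l = klStar' (Bm A) i j := by
  obtain ⟨k, hk, hsup⟩ := Finset.exists_mem_eq_sup (Finset.range n)
    ⟨0, Finset.mem_range.mpr i.pos⟩ (fun k => mPow' (Bm A) k i j)
  by_cases h0 : mPow' (Bm A) k i j = 0
  · left; rw [klStar_apply, hsup, h0]
  · right
    have hij : i = j ∨ k ≠ 0 := by
      rcases Nat.eq_zero_or_pos k with rfl | hk'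
      · left; by_contra hne; exact h0 (by simp [mPow_zero_apply, hne])
      · right; omega
    obtain ⟨l, hlen, hend, hw⟩ := exists_walk_mPow (Bm A) k i j hij
    exact ⟨l, hend, by rw [hw, klStar_apply, ← hsup]⟩

lemma klStar_mul_klStar_le (hlam : lam' A ≠ 0) (i k j : Fin n) :
    klStar' (Bm A) i k * klStar' (Bm A) k j ≤ klStar' (Bm A) i j := by
  rcases klStar_attained A i k with h | ⟨l₁, he₁, hw₁⟩
  · rw [h, zero_mul]; exact zero_le
  rcases klStar_attained A k j with h | ⟨l₂, he₂, hw₂⟩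
  · rw [h, mul_zero]; exact zero_le
  rw [← hw₁, ← hw₂, ← he₁, ← wW_append]
  exact walk_le_klStar A hlam _ i j (by rw [wEnd_append, he₁, he₂])

lemma Bm_mul_klStar_le (hlam : lam' A ≠ 0) (i k j : Fin n) :
    Bm A i k * klStar' (Bm A) k j ≤ klStar' (Bm A) i j := by
  rcases klStar_attained A k j with h | ⟨l, he, hw⟩
  · rw [h, mul_zero]; exact zero_le
  rw [← hw, ← wW_cons]
  exact walk_le_klStar A hlam _ i j (by rw [wEnd_cons, he])

lemma klStar_mul_le_one (hlam : lam' A ≠ 0) (i j : Fin n) :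
    klStar' (Bm A) i j * klStar' (Bm A) j i ≤ 1 := by
  rcases klStar_attained A i j with h | ⟨l₁, he₁, hw₁⟩
  · rw [h, zero_mul]; exact zero_le
  rcases klStar_attained A j i with h | ⟨l₂, he₂, hw₂⟩
  · rw [h, mul_zero]; exact zero_le
  rw [← hw₁, ← hw₂, ← he₁, ← wW_append]
  exact closed_wW_Bm_le_one A hlam i _ (by rw [wEnd_append, he₁, he₂])

end Kleene

section CritK
variable {n : ℕ} (A : Matrix (Fin n) (Fin n) NNReal)

lemma crit_path_Bm (hlam : lam' A ≠ 0) {i j : Fin n} {q : List (Fin n)}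
    (h : A i j * wW A j q = lam' A ^ (q.length + 1)) :
    Bm A i j * wW (Bm A) j q = 1 := by
  rw [wW_Bm]
  show (lam' A)⁻¹ * A i j * ((lam' A)⁻¹ ^ q.length * wW A j q) = 1
  calc (lam' A)⁻¹ * A i j * ((lam' A)⁻¹ ^ q.length * wW A j q)
      = (lam' A)⁻¹ ^ (q.length + 1) * (A i j * wW A j q) := by ring
    _ = (lam' A)⁻¹ ^ (q.length + 1) * lam' A ^ (q.length + 1) := by rw [h]
    _ = 1 := by rw [← mul_pow, inv_mul_cancel₀ hlam, one_pow]

lemma crit_edge_ne_zero (hlam : lam' A ≠ 0) {i j : Fin n} (hc : criticalEdge' A i j) :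
    A i j ≠ 0 := by
  obtain ⟨q, hq1, hq2⟩ := criticalEdge_path A i j hc
  intro h0
  rw [h0, zero_mul] at hq2
  exact pow_ne_zero _ hlam hq2.symm

lemma crit_edge_BmK (hlam : lam' A ≠ 0) {i j : Fin n} (hc : criticalEdge' A i j) :
    Bm A i j * klStar' (Bm A) j i = 1 := by
  obtain ⟨q, hq1, hq2⟩ := criticalEdge_path A i j hc
  have h1 := crit_path_Bm A hlam hq2
  refine le_antisymm ?_ ?_
  · rcases klStar_attained A j i with h | ⟨l, he, hw⟩
    · rw [h, mul_zero]; exact zero_le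
    rw [← hw, ← wW_cons]
    exact closed_wW_Bm_le_one A hlam i _ (by rw [wEnd_cons, he])
  · rw [← h1]
    exact mul_le_mul_right (walk_le_klStar A hlam q j i hq1) _

lemma crit_edge_K_rel (hlam : lam' A ≠ 0) {i j : Fin n} (hc : criticalEdge' A i j)
    (r : Fin n) : Bm A i j * klStar' (Bm A) j r = klStar' (Bm A) i r := by
  refine le_antisymm (Bm_mul_klStar_le A hlam i j r) ?_
  calc klStar' (Bm A) i r = Bm A i j * klStar' (Bm A) j i * klStar' (Bm A) i r := by
        rw [crit_edge_BmK A hlam hc, one_mul]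
    _ = Bm A i j * (klStar' (Bm A) j i * klStar' (Bm A) i r) := by ring
    _ ≤ Bm A i j * klStar' (Bm A) j r :=
        mul_le_mul_right (klStar_mul_klStar_le A hlam j i r) _

lemma K_crit_pair (hlam : lam' A ≠ 0) {i j : Fin n}
    (h1 : Relation.ReflTransGen (criticalEdge' A) i j)
    (h2 : Relation.ReflTransGen (criticalEdge' A) j i) :
    klStar' (Bm A) i j * klStar' (Bm A) j i = 1 := by
  refine le_antisymm (klStar_mul_le_one A hlam i j) ?_
  obtain ⟨l₁, he₁, hc₁⟩ := reflTransGen_to_walk A h1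
  obtain ⟨l₂, he₂, hc₂⟩ := reflTransGen_to_walk A h2
  have hclosed : wEnd i (l₁ ++ l₂) = i := by rw [wEnd_append, he₁, he₂]
  have hcrit : ∀ e ∈ wEdges i (l₁ ++ l₂), criticalEdge' A e.1 e.2 := by
    intro e he
    rw [wEdges_append, he₁] at he
    rcases List.mem_append.mp he with h | h
    · exact hc₁ e h
    · exact hc₂ e h
  have hw := crit_closed_wW A i (l₁ ++ l₂) hlam hclosed hcrit
  have hBm : wW (Bm A) i (l₁ ++ l₂) = 1 := by
    rw [wW_Bm, hw, ← mul_pow, inv_mul_cancel₀ hlam, one_pow]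
  rw [wW_append, he₁] at hBm
  calc (1 : NNReal) = wW (Bm A) i l₁ * wW (Bm A) j l₂ := hBm.symm
    _ ≤ klStar' (Bm A) i j * klStar' (Bm A) j i :=
        mul_le_mul' (walk_le_klStar A hlam l₁ i j he₁) (walk_le_klStar A hlam l₂ j i he₂)

lemma K_pair_crit (hlam : lam' A ≠ 0) {i j : Fin n} (hne : i ≠ j)
    (h : klStar' (Bm A) i j * klStar' (Bm A) j i = 1) :
    (∃ k, criticalEdge' A i k) ∧ (∃ k, criticalEdge' A j k) ∧
      Relation.ReflTransGen (criticalEdge' A) i j ∧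
      Relation.ReflTransGen (criticalEdge' A) j i := by
  rcases klStar_attained A i j with h0 | ⟨l₁, he₁, hw₁⟩
  · rw [h0, zero_mul] at h; exact absurd h.symm one_ne_zero
  rcases klStar_attained A j i with h0 | ⟨l₂, he₂, hw₂⟩
  · rw [h0, mul_zero] at h; exact absurd h.symm one_ne_zero
  have hBm : wW (Bm A) i (l₁ ++ l₂) = 1 := by
    rw [wW_append, he₁, hw₁, hw₂, h]
  have hclosed : wEnd i (l₁ ++ l₂) = i := by rw [wEnd_append, he₁, he₂]
  have hl₁ : l₁ ≠ [] := by
    intro h0; subst h0; rw [wEnd_nil] at he₁; exact hne he₁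
  have hl₂ : l₂ ≠ [] := by
    intro h0; subst h0; rw [wEnd_nil] at he₂; exact hne he₂.symm
  have hwA : wW A i (l₁ ++ l₂) = lam' A ^ (l₁ ++ l₂).length := by
    have := hBm
    rw [wW_Bm] at this
    have h2 : (lam' A) ^ (l₁ ++ l₂).length * ((lam' A)⁻¹ ^ (l₁ ++ l₂).length * wW A i (l₁ ++ l₂))
        = lam' A ^ (l₁ ++ l₂).length * 1 := by rw [this]
    rw [← mul_assoc, ← mul_pow, mul_inv_cancel₀ hlam, one_pow, one_mul, mul_one] at h2
    exact h2
  have hcrit := closed_wW_crit A i (l₁ ++ l₂) (by simp [hl₁]) hclosed hwA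
  have hcrit₁ : ∀ e ∈ wEdges i l₁, criticalEdge' A e.1 e.2 := fun e he =>
    hcrit e (by rw [wEdges_append]; exact List.mem_append.mpr (Or.inl he))
  have hcrit₂ : ∀ e ∈ wEdges j l₂, criticalEdge' A e.1 e.2 := fun e he =>
    hcrit e (by rw [wEdges_append, he₁]; exact List.mem_append.mpr (Or.inr he))
  refine ⟨?_, ?_, ?_, ?_⟩
  · obtain ⟨x, t, rfl⟩ : ∃ x t, l₁ = x :: t := by
      cases l₁ with
      | nil => exact absurd rfl hl₁
      | cons x t => exact ⟨x, t, rfl⟩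
    exact ⟨x, hcrit₁ (i, x) (by rw [wEdges_cons]; simp)⟩
  · obtain ⟨x, t, rfl⟩ : ∃ x t, l₂ = x :: t := by
      cases l₂ with
      | nil => exact absurd rfl hl₂
      | cons x t => exact ⟨x, t, rfl⟩
    exact ⟨x, hcrit₂ (j, x) (by rw [wEdges_cons]; simp)⟩
  · have := walk_to_reflTransGen (R := criticalEdge' A) l₁ i hcrit₁
    rwa [he₁] at this
  · have := walk_to_reflTransGen (R := criticalEdge' A) l₂ j hcrit₂
    rwa [he₂] at this

/-- For mutually reachable critical nodes, columns of `K` are proportional. -/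
lemma K_col_prop (hlam : lam' A ≠ 0) {i j : Fin n}
    (h1 : Relation.ReflTransGen (criticalEdge' A) i j)
    (h2 : Relation.ReflTransGen (criticalEdge' A) j i) (k : Fin n) :
    klStar' (Bm A) k i = klStar' (Bm A) k j * klStar' (Bm A) j i := by
  refine le_antisymm ?_ (klStar_mul_klStar_le A hlam k j i)
  calc klStar' (Bm A) k i
      = klStar' (Bm A) k i * (klStar' (Bm A) i j * klStar' (Bm A) j i) := by
        rw [K_crit_pair A hlam h1 h2, mul_one]
    _ = (klStar' (Bm A) k i * klStar' (Bm A) i j) * klStar' (Bm A) j i := by ring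
    _ ≤ klStar' (Bm A) k j * klStar' (Bm A) j i :=
        mul_le_mul_left (klStar_mul_klStar_le A hlam k i j) _

end CritK

section VstarK
variable {n : ℕ} (A : Matrix (Fin n) (Fin n) NNReal)

noncomputable def mVec' (x : Fin n → NNReal) : Fin n → NNReal :=
  fun i => univ.sup fun j => A i j * x j

def Vstar' : Set (Fin n → NNReal) := {y | ∀ i, mVec' A y i ≤ lam' A * y i}

lemma Vstar_Bm (hlam : lam' A ≠ 0) {u : Fin n → NNReal} (hu : u ∈ Vstar' A) (i : Fin n) :
    (univ.sup fun k => Bm A i k * u k) ≤ u i := by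
  have h := hu i
  rw [mVec'] at h
  have : (univ.sup fun k => Bm A i k * u k) = (lam' A)⁻¹ * univ.sup fun k => A i k * u k := by
    rw [NNReal.mul_finset_sup]
    congr 1; funext k
    show (lam' A)⁻¹ * A i k * u k = _
    ring
  rw [this]
  calc (lam' A)⁻¹ * univ.sup (fun k => A i k * u k) ≤ (lam' A)⁻¹ * (lam' A * u i) :=
        mul_le_mul_right h _
    _ = u i := by rw [← mul_assoc, inv_mul_cancel₀ hlam, one_mul]

lemma mPow_Vstar (hlam : lam' A ≠ 0) {u : Fin n → NNReal} (hu : u ∈ Vstar' A) :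
    ∀ (m : ℕ) (i : Fin n), (univ.sup fun k => mPow' (Bm A) m i k * u k) ≤ u i := by
  intro m
  induction m with
  | zero =>
      intro i
      refine Finset.sup_le fun k _ => ?_
      rw [mPow_zero_apply]
      by_cases h : i = k
      · subst h; simp
      · simp [h]
  | succ m ih =>
      intro i
      refine Finset.sup_le fun k _ => ?_
      rw [mPow_succ_apply, NNReal.finset_sup_mul]
      refine Finset.sup_le fun p _ => ?_
      calc mPow' (Bm A) m i p * Bm A p k * u k
          = mPow' (Bm A) m i p * (Bm A p k * u k) := by ring
        _ ≤ mPow' (Bm A) m i p * u p := by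
            refine mul_le_mul_right ?_ _
            exact le_trans (Finset.le_sup (f := fun k => Bm A p k * u k) (mem_univ k))
              (Vstar_Bm A hlam hu p)
        _ ≤ univ.sup (fun p => mPow' (Bm A) m i p * u p) :=
            Finset.le_sup (f := fun p => mPow' (Bm A) m i p * u p) (mem_univ p)
        _ ≤ u i := ih i

lemma K_mul_Vstar (hlam : lam' A ≠ 0) {u : Fin n → NNReal} (hu : u ∈ Vstar' A)
    (i j : Fin n) : klStar' (Bm A) i j * u j ≤ u i := by
  rw [klStar_apply, NNReal.finset_sup_mul]
  refine Finset.sup_le fun k _ => ?_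
  exact le_trans (le_trans (mul_le_mul_right (le_refl (u j)) _)
    (Finset.le_sup (f := fun p => mPow' (Bm A) k i p * u p) (mem_univ j)))
    (mPow_Vstar A hlam hu k i)

/-- columns of the Kleene star, multiplied by a scalar, lie in `V*`. -/
lemma K_col_Vstar (hlam : lam' A ≠ 0) (j : Fin n) (c : NNReal) :
    (fun i => klStar' (Bm A) i j * c) ∈ Vstar' A := by
  intro i
  rw [mVec']
  refine Finset.sup_le fun k _ => ?_
  have h1 : Bm A i k * klStar' (Bm A) k j ≤ klStar' (Bm A) i j :=
    Bm_mul_klStar_le A hlam i k j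
  have h2 : A i k * klStar' (Bm A) k j ≤ lam' A * klStar' (Bm A) i j := by
    have := mul_le_mul_right h1 (lam' A)
    rw [← mul_assoc] at this
    have hA : lam' A * Bm A i k = A i k := by
      show lam' A * ((lam' A)⁻¹ * A i k) = A i k
      rw [← mul_assoc, mul_inv_cancel₀ hlam, one_mul]
    rwa [hA] at this
  calc A i k * (klStar' (Bm A) k j * c) = (A i k * klStar' (Bm A) k j) * c := by ring
    _ ≤ (lam' A * klStar' (Bm A) i j) * c := mul_le_mul_left h2 _
    _ = lam' A * (klStar' (Bm A) i j * c) := by ring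

lemma Vstar_zero : (0 : Fin n → NNReal) ∈ Vstar' A := by
  intro i; simp [mVec']

lemma Vstar_max {u w : Fin n → NNReal} (hu : u ∈ Vstar' A) (hw : w ∈ Vstar' A) :
    (fun i => max (u i) (w i)) ∈ Vstar' A := by
  intro i
  rw [mVec']
  refine Finset.sup_le fun k _ => ?_
  rcases le_total (u k) (w k) with h | h
  · rw [max_eq_right h]
    calc A i k * w k ≤ lam' A * w i :=
        le_trans (Finset.le_sup (f := fun j => A i j * w j) (mem_univ k)) (hw i)
      _ ≤ lam' A * max (u i) (w i) := mul_le_mul_right (le_max_right _ _) _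
  · rw [max_eq_left h]
    calc A i k * u k ≤ lam' A * u i :=
        le_trans (Finset.le_sup (f := fun j => A i j * u j) (mem_univ k)) (hu i)
      _ ≤ lam' A * max (u i) (w i) := mul_le_mul_right (le_max_left _ _) _

lemma Vstar_finset_sup {ι : Type*} (s : Finset ι) (f : ι → Fin n → NNReal)
    (hf : ∀ j ∈ s, f j ∈ Vstar' A) : (fun i => s.sup fun j => f j i) ∈ Vstar' A := by
  classical
  induction s using Finset.induction_on with
  | empty => simpa [← Pi.zero_def] using Vstar_zero A
  | insert a s hna ih =>
      simp only [Finset.sup_insert]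
      exact Vstar_max A (hf a (Finset.mem_insert_self a s))
        (ih fun j hj => hf j (Finset.mem_insert_of_mem hj))

end VstarK

section Extremals
variable {n : ℕ} (A : Matrix (Fin n) (Fin n) NNReal)

noncomputable def Mcol (j : Fin n) : NNReal := univ.sup fun i => klStar' (Bm A) i j

noncomputable def sCol (j : Fin n) : Fin n → NNReal :=
  fun i => klStar' (Bm A) i j * (Mcol A j)⁻¹

def scaledMaxExtremals' : Set (Fin n → NNReal) :=
  {y | y ∈ Vstar' A ∧ univ.sup y = 1 ∧
    ∀ u w, u ∈ Vstar' A → w ∈ Vstar' A →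
      y = (fun i => max (u i) (w i)) → y = u ∨ y = w}

lemma Mcol_ne_zero (hlam : lam' A ≠ 0) (j : Fin n) : Mcol A j ≠ 0 := by
  have h1 : (1 : NNReal) ≤ Mcol A j := by
    rw [← klStar_diag A hlam j]
    exact Finset.le_sup (f := fun i => klStar' (Bm A) i j) (mem_univ j)
  intro h0; rw [h0] at h1; exact absurd h1 (by simp)

lemma sup_sCol (hlam : lam' A ≠ 0) (j : Fin n) : univ.sup (sCol A j) = 1 := by
  have : univ.sup (sCol A j) = Mcol A j * (Mcol A j)⁻¹ := by
    rw [Mcol, NNReal.finset_sup_mul]; rfl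
  rw [this, mul_inv_cancel₀ (Mcol_ne_zero A hlam j)]

lemma sCol_at (j i : Fin n) : sCol A j i = klStar' (Bm A) i j * (Mcol A j)⁻¹ := rfl

lemma sCol_mem_ext (hlam : lam' A ≠ 0) (j : Fin n) :
    sCol A j ∈ scaledMaxExtremals' A := by
  refine ⟨K_col_Vstar A hlam j _, sup_sCol A hlam j, ?_⟩
  intro u w hu hw heq
  have hkey : ∀ v : Fin n → NNReal, v ∈ Vstar' A → v j = (Mcol A j)⁻¹ →
      (∀ i, v i ≤ sCol A j i) → sCol A j = v := by
    intro v hv hvj hvle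
    funext i
    refine le_antisymm ?_ (hvle i)
    rw [sCol_at, ← hvj]
    exact K_mul_Vstar A hlam hv i j
  have hj : max (u j) (w j) = (Mcol A j)⁻¹ := by
    have h := congrFun heq j
    rw [sCol_at, klStar_diag A hlam j, one_mul] at h
    exact h.symm
  have hule : ∀ i, u i ≤ sCol A j i := fun i => by
    rw [congrFun heq i]; exact le_max_left _ _
  have hwle : ∀ i, w i ≤ sCol A j i := fun i => by
    rw [congrFun heq i]; exact le_max_right _ _
  rcases max_choice (u j) (w j) with h | h
  · exact Or.inl (hkey u hu (by rw [← h, hj]) hule)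
  · exact Or.inr (hkey w hw (by rw [← h, hj]) hwle)

lemma ext_fin_sup (y : Fin n → NNReal)
    (hext : ∀ u w, u ∈ Vstar' A → w ∈ Vstar' A →
      y = (fun i => max (u i) (w i)) → y = u ∨ y = w) :
    ∀ (s : Finset (Fin n)) (f : Fin n → Fin n → NNReal),
      (∀ j ∈ s, f j ∈ Vstar' A) → y = (fun i => s.sup fun j => f j i) →
      (∃ j ∈ s, y = f j) ∨ y = 0 := by
  classical
  intro s
  induction s using Finset.induction_on with
  | empty =>
      intro f _ hy
      right
      funext i
      simpa using congrFun hy i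
  | insert a s hna ih =>
      intro f hf hy
      have hsup : (fun i => s.sup fun j => f j i) ∈ Vstar' A :=
        Vstar_finset_sup A s f (fun j hj => hf j (Finset.mem_insert_of_mem hj))
      have hy' : y = fun i => max (f a i) (s.sup fun j => f j i) := by
        funext i
        rw [congrFun hy i, Finset.sup_insert]
      rcases hext (f a) _ (hf a (Finset.mem_insert_self a s)) hsup hy' with h | h
      · exact Or.inl ⟨a, Finset.mem_insert_self a s, h⟩
      · rcases ih f (fun j hj => hf j (Finset.mem_insert_of_mem hj)) h with ⟨j, hj, hyf⟩ | h0
        · exact Or.inl ⟨j, Finset.mem_insert_of_mem hj, hyf⟩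
        · exact Or.inr h0

lemma ext_eq_range (hlam : lam' A ≠ 0) :
    scaledMaxExtremals' A = Set.range (sCol A) := by
  ext y
  constructor
  · rintro ⟨hy, hsup, hext⟩
    have hrep : y = fun i => univ.sup fun j => klStar' (Bm A) i j * y j := by
      funext i
      refine le_antisymm ?_ ?_
      · have : y i = klStar' (Bm A) i i * y i := by rw [klStar_diag A hlam i, one_mul]
        rw [this]
        exact Finset.le_sup (f := fun j => klStar' (Bm A) i j * y j) (mem_univ i)
      · exact Finset.sup_le fun j _ => K_mul_Vstar A hlam hy i j
    rcases ext_fin_sup A y hext univ (fun j => fun i => klStar' (Bm A) i j * y j)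
        (fun j _ => K_col_Vstar A hlam j (y j)) hrep with ⟨j, _, hyj⟩ | h0
    · have h1 : univ.sup y = univ.sup (fun i => klStar' (Bm A) i j * y j) := by
        rw [← hyj]
      have hMy : Mcol A j * y j = 1 := by
        rw [Mcol, NNReal.finset_sup_mul, ← h1, hsup]
      have hyj' : y j = (Mcol A j)⁻¹ :=
        eq_inv_of_mul_eq_one_left (by rw [mul_comm]; exact hMy)
      exact ⟨j, by rw [hyj]; funext i; rw [sCol_at, ← hyj']⟩
    · exfalso
      rw [h0] at hsup
      have hz : (univ.sup (0 : Fin n → NNReal)) = 0 :=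
        le_antisymm (Finset.sup_le fun i _ => le_rfl) (zero_le)
      rw [hz] at hsup
      exact one_ne_zero hsup.symm
  · rintro ⟨j, rfl⟩
    exact sCol_mem_ext A hlam j

section ColEq
variable {n : ℕ} (A : Matrix (Fin n) (Fin n) NNReal)

lemma K_ne_top : True := trivial

lemma sCol_eq_iff (hlam : lam' A ≠ 0) (i j : Fin n) :
    sCol A i = sCol A j ↔ (i = j ∨ ((∃ k, criticalEdge' A i k) ∧ (∃ k, criticalEdge' A j k) ∧
      Relation.ReflTransGen (criticalEdge' A) i j ∧
      Relation.ReflTransGen (criticalEdge' A) j i)) := by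
  constructor
  · intro h
    by_cases hij : i = j
    · exact Or.inl hij
    right
    have hi := congrFun h i
    have hj := congrFun h j
    rw [sCol_at, sCol_at, klStar_diag A hlam i, one_mul] at hi
    rw [sCol_at, sCol_at, klStar_diag A hlam j, one_mul] at hj
    -- hi : (Mcol A i)⁻¹ = K i j * (Mcol A j)⁻¹
    -- hj : K j i * (Mcol A i)⁻¹ = (Mcol A j)⁻¹
    have hprod : klStar' (Bm A) i j * klStar' (Bm A) j i *
        ((Mcol A i)⁻¹ * (Mcol A j)⁻¹) = (Mcol A i)⁻¹ * (Mcol A j)⁻¹ := by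
      calc klStar' (Bm A) i j * klStar' (Bm A) j i * ((Mcol A i)⁻¹ * (Mcol A j)⁻¹)
          = (klStar' (Bm A) i j * (Mcol A j)⁻¹) * (klStar' (Bm A) j i * (Mcol A i)⁻¹) := by
            ring
        _ = (Mcol A i)⁻¹ * (Mcol A j)⁻¹ := by rw [← hi, hj]
    have hMM : ((Mcol A i)⁻¹ * (Mcol A j)⁻¹ : NNReal) ≠ 0 := by
      simp [Mcol_ne_zero A hlam i, Mcol_ne_zero A hlam j]
    have hone : klStar' (Bm A) i j * klStar' (Bm A) j i = 1 :=
      mul_right_cancel₀ hMM (by rw [hprod, one_mul])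
    exact K_pair_crit A hlam hij hone
  · rintro (rfl | ⟨_, _, h1, h2⟩)
    · rfl
    have hKK : klStar' (Bm A) i j * klStar' (Bm A) j i = 1 := K_crit_pair A hlam h1 h2
    have hKji : klStar' (Bm A) j i ≠ 0 := fun h0 => by
      rw [h0, mul_zero] at hKK; exact one_ne_zero hKK.symm
    have hMi : Mcol A i = Mcol A j * klStar' (Bm A) j i := by
      rw [Mcol, Mcol, NNReal.finset_sup_mul]
      congr 1
      funext k
      exact K_col_prop A hlam h1 h2 k
    funext k
    rw [sCol_at, sCol_at, K_col_prop A hlam h1 h2 k, hMi, mul_inv]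
    calc klStar' (Bm A) k j * klStar' (Bm A) j i * ((Mcol A j)⁻¹ * (klStar' (Bm A) j i)⁻¹)
        = klStar' (Bm A) k j * (Mcol A j)⁻¹ *
            (klStar' (Bm A) j i * (klStar' (Bm A) j i)⁻¹) := by ring
      _ = klStar' (Bm A) k j * (Mcol A j)⁻¹ := by rw [mul_inv_cancel₀ hKji, mul_one]

end ColEq

section Bridge
variable {n : ℕ} (A : Matrix (Fin n) (Fin n) NNReal)

lemma mPow_bridge : ∀ k, mPow' A k = mPow A k := by
  intro k
  induction k with
  | zero => rfl
  | succ k ih => show mProd' (mPow' A k) A = mProd (mPow A k) A; rw [ih]; rfl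

lemma klStar_bridge : klStar' A = klStar A := by
  funext i j
  show (Finset.range n).sup (fun k => mPow' A k i j) = _
  simp only [mPow_bridge]
  rfl

lemma lam_bridge : lam' A = maxCycleMean A := rfl

lemma criticalEdge_bridge : criticalEdge' A = criticalEdge A := rfl

lemma Vstar_bridge : Vstar' A = Vstar A := rfl

lemma sme_bridge : scaledMaxExtremals' A = scaledMaxExtremals A := rfl

end Bridge

section LCdim
variable {n : ℕ} (A : Matrix (Fin n) (Fin n) NNReal)

lemma crit_edge_A_K (hlam : lam' A ≠ 0) {i j : Fin n} (hc : criticalEdge A i j)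
    (r : Fin n) :
    A i j * klStar' (Bm A) j r = maxCycleMean A * klStar' (Bm A) i r := by
  have h := crit_edge_K_rel A hlam (criticalEdge_bridge A ▸ hc) r
  have h2 := congrArg (fun x => lam' A * x) h
  try simp only at h2
  rw [← mul_assoc] at h2
  have hA : lam' A * Bm A i j = A i j := by
    show lam' A * ((lam' A)⁻¹ * A i j) = A i j
    rw [← mul_assoc, mul_inv_cancel₀ hlam, one_mul]
  rw [hA] at h2
  exact h2

lemma crit_edge_A_K_real (hlam : lam' A ≠ 0) {i j : Fin n} (hc : criticalEdge A i j)
    (r : Fin n) :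
    (A i j : ℝ) * (klStar' (Bm A) j r : ℝ) =
      (maxCycleMean A : ℝ) * (klStar' (Bm A) i r : ℝ) := by
  have := crit_edge_A_K A hlam hc r
  exact_mod_cast congrArg (fun x : NNReal => (x : ℝ)) this

/-- Spanning: an element of `LC` is determined on each critical class. -/
lemma LC_span (hlam : lam' A ≠ 0) {x : Fin n → ℝ} (hx : x ∈ LC A) (r : Fin n) :
    ∀ i, Relation.ReflTransGen (criticalEdge A) r i →
      Relation.ReflTransGen (criticalEdge A) i r →
      x i = x r * (klStar' (Bm A) i r : ℝ) := by
  intro i h1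
  induction h1 with
  | refl => intro _; rw [klStar_diag A hlam r]; simp
  | tail hrb hedge =>
      intro h2
      rename_i b c ih
      have hbr : Relation.ReflTransGen (criticalEdge A) b r :=
        Relation.ReflTransGen.head hedge h2
      have hxb : x b = x r * (klStar' (Bm A) b r : ℝ) := ih hbr
      have hLC := hx b c hedge
      have hKrel := crit_edge_A_K_real A hlam hedge r
      have hAne : (A b c : ℝ) ≠ 0 := by
        exact_mod_cast crit_edge_ne_zero A hlam (criticalEdge_bridge A ▸ hedge)
      apply mul_left_cancel₀ hAne
      rw [hLC, hxb]
      calc (maxCycleMean A : ℝ) * (x r * (klStar' (Bm A) b r : ℝ))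
          = x r * ((maxCycleMean A : ℝ) * (klStar' (Bm A) b r : ℝ)) := by ring
        _ = x r * ((A b c : ℝ) * (klStar' (Bm A) c r : ℝ)) := by rw [← hKrel]
        _ = (A b c : ℝ) * (x r * (klStar' (Bm A) c r : ℝ)) := by ring

open Classical in
/-- The candidate inverse map into `LC`. -/
lemma LC_G_mem (hlam : lam' A ≠ 0)
    (av : Quotient (critSetoid A) → ℝ) (bv : {i : Fin n // ¬ criticalNode A i} → ℝ) :
    (fun i => if h : criticalNode A i then
        av (Quotient.mk (critSetoid A) ⟨i, h⟩) *
          (klStar' (Bm A) i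
            ((Quotient.out (Quotient.mk (critSetoid A) ⟨i, h⟩)).1) : ℝ)
      else bv ⟨i, h⟩) ∈ LC A := by
  intro i j hedge
  have hci : criticalNode A i := ⟨j, hedge⟩
  have hsym := criticalEdge_symm_reach A i j (criticalEdge_bridge A ▸ hedge)
  have hcj : criticalNode A j := hsym.2
  have hrel : (critSetoid A).r ⟨j, hcj⟩ ⟨i, hci⟩ :=
    ⟨hsym.1, Relation.ReflTransGen.single hedge⟩
  have hcc : (Quotient.mk (critSetoid A) ⟨j, hcj⟩) = Quotient.mk (critSetoid A) ⟨i, hci⟩ :=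
    Quot.sound hrel
  simp only [dif_pos hci, dif_pos hcj, hcc]
  set r := (Quotient.out (Quotient.mk (critSetoid A) ⟨i, hci⟩)).1
  have hKrel := crit_edge_A_K_real A hlam hedge r
  set q := av (Quotient.mk (critSetoid A) ⟨i, hci⟩)
  calc (A i j : ℝ) * (q * (klStar' (Bm A) j r : ℝ))
      = q * ((A i j : ℝ) * (klStar' (Bm A) j r : ℝ)) := by ring
    _ = q * ((maxCycleMean A : ℝ) * (klStar' (Bm A) i r : ℝ)) := by rw [hKrel]
    _ = (maxCycleMean A : ℝ) * (q * (klStar' (Bm A) i r : ℝ)) := by ring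

noncomputable def LCF : LC A →ₗ[ℝ]
    (Quotient (critSetoid A) → ℝ) × ({i : Fin n // ¬ criticalNode A i} → ℝ) where
  toFun x := (fun c => x.1 (Quotient.out c).1, fun m => x.1 m.1)
  map_add' x y := rfl
  map_smul' c x := rfl

open Classical in
lemma LCF_bijective (hlam : lam' A ≠ 0) : Function.Bijective (LCF A) := by
  set G : ((Quotient (critSetoid A) → ℝ) × ({i : Fin n // ¬ criticalNode A i} → ℝ)) →
      LC A := fun p => ⟨fun i => if h : criticalNode A i then
        p.1 (Quotient.mk (critSetoid A) ⟨i, h⟩) *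
          (klStar' (Bm A) i
            ((Quotient.out (Quotient.mk (critSetoid A) ⟨i, h⟩)).1) : ℝ)
      else p.2 ⟨i, h⟩, LC_G_mem A hlam p.1 p.2⟩ with hG
  constructor
  · apply Function.LeftInverse.injective (g := G)
    intro x
    ext i
    show (if h : criticalNode A i then _ else _) = x.1 i
    by_cases h : criticalNode A i
    · rw [dif_pos h]
      have hrel' := Quotient.exact
        (Quotient.out_eq (Quotient.mk (critSetoid A) ⟨i, h⟩))
      exact (LC_span A hlam x.2 _ i hrel'.1 hrel'.2).symm
    · rw [dif_neg h]
      rfl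
  · intro p
    refine ⟨G p, ?_⟩
    have h1 : ∀ c, (G p).1 (Quotient.out c).1 = p.1 c := by
      intro c
      have hcrit : criticalNode A (Quotient.out c).1 := (Quotient.out c).2
      show (if h : criticalNode A (Quotient.out c).1 then _ else _) = p.1 c
      rw [dif_pos hcrit]
      have heta : (⟨(Quotient.out c).1, hcrit⟩ : {i : Fin n // criticalNode A i}) =
          Quotient.out c := rfl
      rw [heta, Quotient.out_eq c, klStar_diag A hlam]
      simp
    have h2 : ∀ m, (G p).1 m.1 = p.2 m := by
      intro m
      show (if h : criticalNode A m.1 then _ else _) = p.2 m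
      rw [dif_neg m.2]
    refine Prod.ext ?_ ?_
    · funext c; exact h1 c
    · funext m; exact h2 m

lemma LC_finrank (hlam : lam' A ≠ 0) :
    Module.finrank ℝ (LC A) =
      Nat.card (Quotient (critSetoid A)) + {i : Fin n | ¬ criticalNode A i}.ncard := by
  classical
  haveI : Finite (Quotient (critSetoid A)) := Quotient.finite _
  haveI : Fintype (Quotient (critSetoid A)) := Fintype.ofFinite _
  haveI : Fintype {i : Fin n // ¬ criticalNode A i} := Fintype.ofFinite _
  have e := LinearEquiv.ofBijective (LCF A) (LCF_bijective A hlam)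
  rw [e.finrank_eq]
  rw [Module.finrank_prod, Module.finrank_pi, Module.finrank_pi]
  congr 1
  · exact (Nat.card_eq_fintype_card).symm
  · rw [← Nat.card_coe_set_eq, Nat.card_eq_fintype_card]
    exact Fintype.card_congr (Equiv.refl _)

end LCdim

section Count
variable {n : ℕ} (A : Matrix (Fin n) (Fin n) NNReal)

open Classical in
noncomputable def phi (i : Fin n) :
    Quotient (critSetoid A) ⊕ {i : Fin n // ¬ criticalNode A i} :=
  if h : criticalNode A i then .inl (Quotient.mk (critSetoid A) ⟨i, h⟩) else .inr ⟨i, h⟩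

open Classical in
lemma phi_surjective : Function.Surjective (phi A) := by
  rintro (c | m)
  · refine ⟨(Quotient.out c).1, ?_⟩
    rw [phi, dif_pos (Quotient.out c).2]
    rw [show (⟨(Quotient.out c).1, (Quotient.out c).2⟩ : {i : Fin n // criticalNode A i}) =
      Quotient.out c from rfl, Quotient.out_eq]
  · exact ⟨m.1, by rw [phi, dif_neg m.2]⟩

open Classical in
lemma sCol_eq_iff_phi (hlam : lam' A ≠ 0) (i j : Fin n) :
    sCol A i = sCol A j ↔ phi A i = phi A j := by
  rw [sCol_eq_iff A hlam i j]
  unfold phi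
  by_cases hi : criticalNode A i <;> by_cases hj : criticalNode A j
  · rw [dif_pos hi, dif_pos hj]
    constructor
    · rintro (rfl | ⟨_, _, h3, h4⟩)
      · rfl
      · exact congrArg Sum.inl (Quot.sound ⟨h3, h4⟩)
    · intro h
      have h2 : (Quotient.mk (critSetoid A) ⟨i, hi⟩) = Quotient.mk (critSetoid A) ⟨j, hj⟩ :=
        Sum.inl.injEq .. ▸ h
      exact Or.inr ⟨hi, hj, (Quotient.exact h2).1, (Quotient.exact h2).2⟩
  · rw [dif_pos hi, dif_neg hj]
    simp only [reduceCtorEq, iff_false]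
    rintro (rfl | ⟨_, h2, _, _⟩)
    · exact hj hi
    · exact hj h2
  · rw [dif_neg hi, dif_pos hj]
    simp only [reduceCtorEq, iff_false]
    rintro (rfl | ⟨h1, _, _, _⟩)
    · exact hi hj
    · exact hi h1
  · rw [dif_neg hi, dif_neg hj]
    constructor
    · rintro (rfl | ⟨h1, _, _, _⟩)
      · rfl
      · exact absurd h1 hi
    · intro h
      have h2 : (⟨i, hi⟩ : {i : Fin n // ¬ criticalNode A i}) = ⟨j, hj⟩ :=
        Sum.inr.injEq .. ▸ h
      exact Or.inl (congrArg Subtype.val h2)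

open Classical in
lemma ext_card (hlam : lam' A ≠ 0) :
    (scaledMaxExtremals A).ncard =
      Nat.card (Quotient (critSetoid A)) + {i : Fin n | ¬ criticalNode A i}.ncard := by
  haveI : Finite (Quotient (critSetoid A)) := Quotient.finite _
  have hset : scaledMaxExtremals A = Set.range (sCol A) := by
    rw [← sme_bridge]; exact ext_eq_range A hlam
  rw [hset]
  set ψ : Set.range (sCol A) → (Quotient (critSetoid A) ⊕ {i : Fin n // ¬ criticalNode A i}) :=
    fun v => phi A (Classical.choose v.2) with hψ
  have hcs : ∀ v : Set.range (sCol A), sCol A (Classical.choose v.2) = v.1 :=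
    fun v => Classical.choose_spec v.2
  have hbij : Function.Bijective ψ := by
    constructor
    · intro v w h
      have h2 : sCol A (Classical.choose v.2) = sCol A (Classical.choose w.2) :=
        (sCol_eq_iff_phi A hlam _ _).mpr h
      rw [hcs v, hcs w] at h2
      exact Subtype.ext h2
    · intro t
      obtain ⟨i, hi⟩ := phi_surjective A t
      refine ⟨⟨sCol A i, Set.mem_range_self i⟩, ?_⟩
      have h2 : sCol A (Classical.choose (Set.mem_range_self (f := sCol A) i)) = sCol A i :=
        Classical.choose_spec (Set.mem_range_self (f := sCol A) i)
      rw [hψ]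
      show phi A (Classical.choose _) = t
      rw [← hi]
      exact (sCol_eq_iff_phi A hlam _ _).mp h2
  calc (Set.range (sCol A)).ncard
      = Nat.card (Set.range (sCol A)) := (Nat.card_coe_set_eq _).symm
    _ = Nat.card (Quotient (critSetoid A) ⊕ {i : Fin n // ¬ criticalNode A i}) :=
        Nat.card_eq_of_bijective ψ hbij
    _ = Nat.card (Quotient (critSetoid A)) + Nat.card {i : Fin n // ¬ criticalNode A i} :=
        Nat.card_sum
    _ = Nat.card (Quotient (critSetoid A)) + {i : Fin n | ¬ criticalNode A i}.ncard := by
        rw [← Nat.card_coe_set_eq]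
        rfl

end Count

theorem stmt_19 {n : ℕ} (A : Matrix (Fin n) (Fin n) NNReal)
    (hlam : 0 < maxCycleMean A) :
    (scaledMaxExtremals A).ncard = Module.finrank ℝ (LC A) ∧
    (scaledMaxExtremals A).ncard =
      Nat.card (Quotient (critSetoid A)) +
        {i : Fin n | ¬ criticalNode A i}.ncard := by
  have hlam' : lam' A ≠ 0 := hlam.ne'
  constructor
  · rw [ext_card A hlam', LC_finrank A hlam']
  · exact ext_card A hlam'
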